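/- Let n ≥ 3, let d be an integer with 2 ≤ d ≤ n − 1, and let m ≥ 0. Let W denote the composite of simple reflections obtained by applying, in order: s_{d+1}, s_{d+2}, …, s_{n−1}; then s_n, s_{n−1}, …, s_1; then s_2, s_3, …, s_d. Applying the block W to the simple root α_d a total of m times in succession yields the vector m·𝟙 + α_d. -/

import Mathlib

/-- The component number (in `{1, …, n}`) of a cyclic index `j : ZMod n`. -/
def compNo {n : ℕ} (j : ZMod n) : ℕ := if j.val = 0 then n else j.val

/-- The `i`-th simple root (standard basis vector) of type `Ã_{n-1}`. -/
def stdRoot (n : ℕ) (i : ZMod n) : ZMod n → ℤ := fun j => if j = i then 1 else 0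

/-- The `i`-th simple reflection: `(s_i v)_j = v_j` for `j ≠ i`, and
`(s_i v)_i = v_{i-1} + v_{i+1} - v_i` (indices mod `n`). -/
def simpleRefl (n : ℕ) (i : ZMod n) (v : ZMod n → ℤ) : ZMod n → ℤ :=
  fun j => if j = i then v (i - 1) + v (i + 1) - v i else v j

/-- Apply a list of simple reflections in order (head of the list applied first). -/
def applySeq (n : ℕ) (L : List (ZMod n)) (v : ZMod n → ℤ) : ZMod n → ℤ :=
  L.foldl (fun w i => simpleRefl n i w) v

/-- Interpret a list of natural-number indices as cyclic indices mod `n`. -/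
def natSeq (n : ℕ) (L : List ℕ) : List (ZMod n) := L.map (fun k => (k : ZMod n))

/-- A real root: a vector obtained from a simple root by a finite sequence of
simple reflections. -/
def IsRealRoot (n : ℕ) (v : ZMod n → ℤ) : Prop :=
  ∃ (L : List (ZMod n)) (k : ZMod n), v = applySeq n L (stdRoot n k)

/-- The vector whose first `a` components are `x`, next `b` components are `y`,
and remaining components are `z`. -/
def blockVec (n : ℕ) (x y z : ℤ) (a b : ℕ) : ZMod n → ℤ :=
  fun j => if compNo j ≤ a then x else if compNo j ≤ a + b then y else z

/-- The all-ones vector `𝟙`. -/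
def onesVec (n : ℕ) : ZMod n → ℤ := fun _ => 1

/-- The block of reflections `s_{d+1}, …, s_{n-1}; s_n, s_{n-1}, …, s_1; s_2, …, s_d`
(in order of application). -/
def blockW (n d : ℕ) : List ℕ :=
  List.range' (d+1) (n - 1 - d) ++ (List.range' 1 n).reverse ++ List.range' 2 (d - 1)

/-- The block of reflections `s_1, …, s_{a+b}; s_{a+b-1}, …, s_1; s_{a+b+1}, …, s_n;
s_{n-1}, …, s_{a+b+1}` (in order of application), with `d = a + b`. -/
def blockW2 (n d : ℕ) : List ℕ :=
  List.range' 1 d ++ (List.range' 1 (d-1)).reverse ++ List.range' (d+1) (n - d) ++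
    (List.range' (d+1) (n - 1 - d)).reverse


-- auxiliary definitions and lemmas

def bv (x y z : ℤ) (a b c : ℕ) : ℤ := if c ≤ a then x else if c ≤ a + b then y else z

section helpers
variable {n : ℕ}

lemma compNo_pos (hn : 0 < n) (j : ZMod n) : 1 ≤ compNo j ∧ compNo j ≤ n := by
  have : NeZero n := ⟨hn.ne'⟩
  unfold compNo
  split_ifs with h
  · omega
  · exact ⟨by omega, (ZMod.val_lt j).le⟩

lemma cast_compNo (hn : 0 < n) (j : ZMod n) : ((compNo j : ℕ) : ZMod n) = j := by
  have : NeZero n := ⟨hn.ne'⟩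
  unfold compNo
  split_ifs with h
  · rw [ZMod.natCast_self]
    exact ((ZMod.val_eq_zero j).mp h).symm
  · exact ZMod.natCast_rightInverse j

lemma compNo_cast (hn : 0 < n) (k : ℕ) (h1 : 1 ≤ k) (h2 : k ≤ n) :
    compNo ((k : ℕ) : ZMod n) = k := by
  have : NeZero n := ⟨hn.ne'⟩
  unfold compNo
  rcases eq_or_lt_of_le h2 with rfl | h
  · simp [ZMod.natCast_self]
  · rw [ZMod.val_cast_of_lt h, if_neg (by omega)]

lemma eq_cast_iff (hn : 0 < n) (j : ZMod n) (k : ℕ) (h1 : 1 ≤ k) (h2 : k ≤ n) :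
    j = (k : ZMod n) ↔ compNo j = k := by
  constructor
  · rintro rfl; exact compNo_cast hn k h1 h2
  · intro h; rw [← cast_compNo hn j, h]

lemma compNo_pred (hn : 0 < n) (i : ℕ) (h1 : 1 ≤ i) (h2 : i ≤ n) :
    compNo ((i : ZMod n) - 1) = if i = 1 then n else i - 1 := by
  have hc : (i : ZMod n) - 1 = ((if i = 1 then n else i - 1 : ℕ) : ZMod n) := by
    split_ifs with h
    · subst h; simp [ZMod.natCast_self]
    · have he : i - 1 + 1 = i := by omega
      conv_lhs => rw [← he]
      push_cast
      ring
  rw [hc]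
  split_ifs with h
  · exact compNo_cast hn n hn le_rfl
  · exact compNo_cast hn (i-1) (by omega) (by omega)

lemma compNo_succ (hn : 0 < n) (i : ℕ) (h2 : i ≤ n) :
    compNo ((i : ZMod n) + 1) = if i = n then 1 else i + 1 := by
  have hc : (i : ZMod n) + 1 = ((if i = n then 1 else i + 1 : ℕ) : ZMod n) := by
    split_ifs with h
    · subst h; simp [ZMod.natCast_self]
    · push_cast; ring
  rw [hc]
  split_ifs with h
  · exact compNo_cast hn 1 le_rfl hn
  · exact compNo_cast hn (i+1) (by omega) (by omega)

lemma stepLemma (hn : 0 < n) (i : ℕ) (hi1 : 1 ≤ i) (hi2 : i ≤ n) (f g : ℕ → ℤ)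
    (h1 : f (if i = 1 then n else i - 1) + f (if i = n then 1 else i + 1) - f i = g i)
    (h2 : ∀ c, 1 ≤ c → c ≤ n → c ≠ i → f c = g c) :
    simpleRefl n (i : ZMod n) (fun j => f (compNo j)) = fun j => g (compNo j) := by
  funext j
  show (if j = (i : ZMod n) then
      f (compNo ((i : ZMod n) - 1)) + f (compNo ((i : ZMod n) + 1)) - f (compNo (i : ZMod n))
    else f (compNo j)) = g (compNo j)
  split_ifs with h
  · have hj : compNo j = i := (eq_cast_iff hn j i hi1 hi2).mp h
    rw [compNo_pred hn i hi1 hi2, compNo_succ hn i hi2, compNo_cast hn i hi1 hi2, hj, h1]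
  · have hb := compNo_pos hn j
    refine h2 _ hb.1 hb.2 ?_
    intro hc
    exact h (by rw [← cast_compNo hn j, hc])

lemma applySeq_append (L1 L2 : List ℕ) (v : ZMod n → ℤ) :
    applySeq n (natSeq n (L1 ++ L2)) v = applySeq n (natSeq n L2) (applySeq n (natSeq n L1) v) := by
  simp [applySeq, natSeq, List.foldl_append]

lemma applySeq_singleton (i : ℕ) (v : ZMod n → ℤ) :
    applySeq n (natSeq n [i]) v = simpleRefl n (i : ZMod n) v := rfl

lemma constSweep (L : List ℕ) (f : ℕ → ℤ)
    (h : ∀ i ∈ L, simpleRefl n (i : ZMod n) (fun j => f (compNo j)) = fun j => f (compNo j)) :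
    applySeq n (natSeq n L) (fun j => f (compNo j)) = fun j => f (compNo j) := by
  induction L with
  | nil => rfl
  | cons i L ih =>
    have h0 : applySeq n (natSeq n (i :: L)) (fun j => f (compNo j)) =
        applySeq n (natSeq n L) (simpleRefl n (i : ZMod n) (fun j => f (compNo j))) := rfl
    rw [h0, h i (by simp), ih (fun i hi => h i (by simp [hi]))]

lemma simpleRefl_shift (i : ZMod n) (v : ZMod n → ℤ) (c : ℤ) :
    simpleRefl n i (fun j => c + v j) = fun j => c + simpleRefl n i v j := by
  funext j
  simp only [simpleRefl]
  split_ifs <;> ring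

lemma applySeqZ_shift (L : List (ZMod n)) (v : ZMod n → ℤ) (c : ℤ) :
    applySeq n L (fun j => c + v j) = fun j => c + applySeq n L v j := by
  induction L generalizing v with
  | nil => rfl
  | cons i L ih =>
    have h0 : applySeq n (i :: L) (fun j => c + v j) =
        applySeq n L (simpleRefl n i (fun j => c + v j)) := rfl
    rw [h0, simpleRefl_shift, ih]
    rfl

end helpers

lemma range'_split (s m k : ℕ) : List.range' s (m + k) = List.range' s m ++ List.range' (s + m) k := by
  have h := (List.range'_append (s := s) (m := m) (n := k) (step := 1)).symm
  simp only [one_mul, Nat.add_comm k m] at h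
  exact h

lemma range'_split' (s m k t u : ℕ) (h1 : m = k + t) (h2 : u = s + k) :
    List.range' s m = List.range' s k ++ List.range' u t := by
  subst h1 h2
  exact range'_split s k t

section main
variable (a c : ℕ)

local notation "N" => a + c + 3

lemma hn0 : 0 < a + c + 3 := by omega

lemma upSweep : ∀ k, k ≤ c →
    applySeq N (natSeq N (List.range' (a+3) k)) (fun j => bv 0 1 0 (a+1) 1 (compNo j)) =
      fun j => bv 0 1 0 (a+1) (k+1) (compNo j) := by
  intro k hk
  induction k with
  | zero => rfl
  | succ k ih =>
    rw [List.range'_1_concat, applySeq_append, ih (by omega), applySeq_singleton]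
    apply stepLemma (hn0 a c) (a+3+k) (by omega) (by omega)
    · simp only [bv]; split_ifs <;> omega
    · intro e he1 he2 hne; simp only [bv]; split_ifs <;> omega

lemma stepN : simpleRefl N ((N : ℕ) : ZMod N) (fun j => bv 0 1 0 (a+1) (c+1) (compNo j)) =
    fun j => bv 0 1 0 (a+1) (c+2) (compNo j) := by
  apply stepLemma (hn0 a c) (a+c+3) (by omega) (by omega)
  · simp only [bv]; split_ifs <;> omega
  · intro e he1 he2 hne; simp only [bv]; split_ifs <;> omega

lemma downConst1 : applySeq N (natSeq N (List.range' (a+3) c).reverse)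
    (fun j => bv 0 1 0 (a+1) (c+2) (compNo j)) = fun j => bv 0 1 0 (a+1) (c+2) (compNo j) := by
  apply constSweep
  intro i hi
  rw [List.mem_reverse, List.mem_range'_1] at hi
  apply stepLemma (hn0 a c) i (by omega) (by omega)
  · simp only [bv]; split_ifs <;> omega
  · intro e he1 he2 hne; rfl

lemma stepD1 : simpleRefl N ((a+2 : ℕ) : ZMod N) (fun j => bv 0 1 0 (a+1) (c+2) (compNo j)) =
    fun j => bv 0 1 0 (a+2) (c+1) (compNo j) := by
  apply stepLemma (hn0 a c) (a+2) (by omega) (by omega)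
  · simp only [bv]; split_ifs <;> omega
  · intro e he1 he2 hne; simp only [bv]; split_ifs <;> omega

lemma downConst2 : applySeq N (natSeq N (List.range' 2 a).reverse)
    (fun j => bv 0 1 0 (a+2) (c+1) (compNo j)) = fun j => bv 0 1 0 (a+2) (c+1) (compNo j) := by
  apply constSweep
  intro i hi
  rw [List.mem_reverse, List.mem_range'_1] at hi
  apply stepLemma (hn0 a c) i (by omega) (by omega)
  · simp only [bv]; split_ifs <;> omega
  · intro e he1 he2 hne; rfl

lemma step1 : simpleRefl N ((1 : ℕ) : ZMod N) (fun j => bv 0 1 0 (a+2) (c+1) (compNo j)) =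
    fun j => bv 1 0 1 1 (a+1) (compNo j) := by
  apply stepLemma (hn0 a c) 1 (by omega) (by omega)
  · simp only [bv]; split_ifs <;> omega
  · intro e he1 he2 hne; simp only [bv]; split_ifs <;> omega

lemma upSweep2 : ∀ k, k ≤ a →
    applySeq N (natSeq N (List.range' 2 k)) (fun j => bv 1 0 1 1 (a+1) (compNo j)) =
      fun j => bv 1 0 1 (k+1) (a+1-k) (compNo j) := by
  intro k hk
  induction k with
  | zero =>
    show _ = fun j => bv 1 0 1 (0+1) (a+1-0) (compNo j)
    simp only [Nat.sub_zero, Nat.zero_add]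
    rfl
  | succ k ih =>
    rw [List.range'_1_concat, applySeq_append, ih (by omega), applySeq_singleton]
    apply stepLemma (hn0 a c) (2+k) (by omega) (by omega)
    · simp only [bv]; split_ifs <;> omega
    · intro e he1 he2 hne; simp only [bv]; split_ifs <;> omega

lemma stepD2 : simpleRefl N ((a+2 : ℕ) : ZMod N) (fun j => bv 1 0 1 (a+1) 1 (compNo j)) =
    fun j => bv 1 2 1 (a+1) 1 (compNo j) := by
  apply stepLemma (hn0 a c) (a+2) (by omega) (by omega)
  · simp only [bv]; split_ifs <;> omega
  · intro e he1 he2 hne; simp only [bv]; split_ifs <;> omega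

lemma bigSplit : List.range' 1 (a + c + 3) =
    [1] ++ List.range' 2 a ++ [a+2] ++ List.range' (a+3) c ++ [a+c+3] := by
  rw [range'_split' 1 (a+c+3) 1 (a+c+2) 2 (by omega) (by omega),
      range'_split' 2 (a+c+2) a (c+2) (a+2) (by omega) (by omega),
      range'_split' (a+2) (c+2) 1 (c+1) (a+3) (by omega) (by omega),
      range'_split' (a+3) (c+1) c 1 (a+c+3) (by omega) (by omega),
      List.range'_one, List.range'_one, List.range'_one]
  simp [List.append_assoc]

lemma oneBlock :
    applySeq N (natSeq N (blockW N (a+2))) (fun j => bv 0 1 0 (a+1) 1 (compNo j)) =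
      fun j => bv 1 2 1 (a+1) 1 (compNo j) := by
  have hW : blockW N (a+2) =
      List.range' (a+3) c ++ ([a+c+3] ++ (List.range' (a+3) c).reverse ++ [a+2] ++
        (List.range' 2 a).reverse ++ [1]) ++ (List.range' 2 a ++ [a+2]) := by
    unfold blockW
    have h1 : (a+c+3) - 1 - (a+2) = c := by omega
    have h2 : (a+2) - 1 = a + 1 := by omega
    have h3 : (a+2) + 1 = a + 3 := by omega
    rw [h1, h2, h3, bigSplit]
    have h4 : List.range' 2 (a+1) = List.range' 2 a ++ [a+2] :=
      range'_split' 2 (a+1) a 1 (a+2) (by omega) (by omega) |>.trans (by rw [List.range'_one])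
    rw [h4]
    simp [List.reverse_append]
  rw [hW]
  simp only [List.append_assoc]
  rw [applySeq_append, upSweep a c c le_rfl,
      applySeq_append, applySeq_singleton, stepN,
      applySeq_append, downConst1,
      applySeq_append, applySeq_singleton, stepD1,
      applySeq_append, downConst2,
      applySeq_append, applySeq_singleton, step1,
      applySeq_append, upSweep2 a c a le_rfl]
  have : a + 1 - a = 1 := by omega
  rw [this, applySeq_singleton, stepD2]

end main


theorem statement7 (n : ℕ) (hn : 3 ≤ n) (d : ℕ) (hd1 : 2 ≤ d) (hd2 : d ≤ n - 1) (m : ℕ) :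
    (fun v => applySeq n (natSeq n (blockW n d)) v)^[m] (stdRoot n (d : ZMod n)) =
      (m : ℤ) • onesVec n + stdRoot n (d : ZMod n) := by
  obtain ⟨a, rfl⟩ : ∃ a, d = a + 2 := ⟨d - 2, by omega⟩
  obtain ⟨c, rfl⟩ : ∃ c, n = a + c + 3 := ⟨n - a - 3, by omega⟩
  have hN : 0 < a + c + 3 := by omega
  have hstd : stdRoot (a+c+3) ((a+2 : ℕ) : ZMod (a+c+3)) =
      fun j => bv 0 1 0 (a+1) 1 (compNo j) := by
    funext j
    show (if j = ((a+2 : ℕ) : ZMod (a+c+3)) then (1:ℤ) else 0) = _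
    simp only [eq_cast_iff hN j (a+2) (by omega) (by omega)]
    have hb := compNo_pos hN j
    simp only [bv]
    split_ifs <;> omega
  have hfin : (fun j => bv 1 2 1 (a+1) 1 (compNo j)) =
      onesVec (a+c+3) + stdRoot (a+c+3) ((a+2 : ℕ) : ZMod (a+c+3)) := by
    funext j
    show _ = (1 : ℤ) + (if j = ((a+2 : ℕ) : ZMod (a+c+3)) then (1:ℤ) else 0)
    simp only [eq_cast_iff hN j (a+2) (by omega) (by omega)]
    have hb := compNo_pos hN j
    simp only [bv]
    split_ifs <;> omega
  have hkey : applySeq (a+c+3) (natSeq (a+c+3) (blockW (a+c+3) (a+2)))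
      (stdRoot (a+c+3) ((a+2 : ℕ) : ZMod (a+c+3))) =
      onesVec (a+c+3) + stdRoot (a+c+3) ((a+2 : ℕ) : ZMod (a+c+3)) := by
    conv_lhs => rw [hstd]
    rw [oneBlock, hfin]
  induction m with
  | zero => simp
  | succ m ih =>
    rw [Function.iterate_succ_apply', ih]
    have h1 : ((m : ℤ) • onesVec (a+c+3) + stdRoot (a+c+3) ((a+2 : ℕ) : ZMod (a+c+3))) =
        fun j => (m : ℤ) + stdRoot (a+c+3) ((a+2 : ℕ) : ZMod (a+c+3)) j := by
      funext j
      simp [onesVec]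
    show applySeq (a+c+3) (natSeq (a+c+3) (blockW (a+c+3) (a+2)))
        ((m : ℤ) • onesVec (a+c+3) + stdRoot (a+c+3) ((a+2 : ℕ) : ZMod (a+c+3))) = _
    rw [h1, applySeqZ_shift, hkey]
    funext j
    simp [onesVec]
    ring
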